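/- With points i₁ < j₁ < ⋯ < i_{2k+1} < j_{2k+1} in circular order and Z = ⟨(i_l j_{l−1}) : l = 1,…,2k+1⟩ acting on the symmetric group by conjugation, the stabilizer in Z of the involution π = ∏_{l=1}^{2k+1} (i_l j_{l+k-1}) is trivial; consequently the orbit of π under Z-conjugation has exactly 2^{2k+1} elements. -/

import Mathlib

section SwapProd

variable {ι α : Type*} [DecidableEq α] (f g : ι → α)
  (hfg : ∀ a b : ι, f a ≠ g b)
  (hf : Function.Injective f) (hg : Function.Injective g)

include hfg hf hg

private lemma swap_disjoint : ∀ a b : ι, a ≠ b →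
    ∀ x, Equiv.swap (f a) (g a) x = x ∨ Equiv.swap (f b) (g b) x = x := by
  intro a b hab x
  by_cases hx : x = f a ∨ x = g a
  · right
    refine Equiv.swap_apply_of_ne_of_ne ?_ ?_
    · rcases hx with rfl | rfl
      · exact fun h => hab (hf h)
      · exact fun h => hfg b a h.symm
    · rcases hx with rfl | rfl
      · exact hfg a b
      · exact fun h => hab (hg h)
  · push_neg at hx
    exact Or.inl (Equiv.swap_apply_of_ne_of_ne hx.1 hx.2)

private lemma swap_commute (a b : ι) (hab : a ≠ b) :
    Commute (Equiv.swap (f a) (g a)) (Equiv.swap (f b) (g b)) :=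
  Equiv.Perm.Disjoint.commute (swap_disjoint f g hfg hf hg a b hab)

variable [DecidableEq ι]

private noncomputable def swapProd (S : Finset ι) : Equiv.Perm α :=
  S.noncommProd (fun l => Equiv.swap (f l) (g l))
    (fun a _ b _ hab => swap_commute f g hfg hf hg a b hab)

set_option linter.unusedSectionVars false

private lemma swapProd_empty : swapProd f g hfg hf hg (∅ : Finset ι) = 1 :=
  Finset.noncommProd_empty _ _

private lemma swapProd_insert {S : Finset ι} {a : ι} (ha : a ∉ S) :
    swapProd f g hfg hf hg (insert a S) =
      Equiv.swap (f a) (g a) * swapProd f g hfg hf hg S :=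
  Finset.noncommProd_insert_of_notMem _ _ _ _ ha

private lemma swapProd_spec (S : Finset ι) :
    (∀ x, (∀ l ∈ S, x ≠ f l ∧ x ≠ g l) → swapProd f g hfg hf hg S x = x) ∧
    (∀ l ∈ S, swapProd f g hfg hf hg S (f l) = g l ∧
      swapProd f g hfg hf hg S (g l) = f l) := by
  classical
  induction S using Finset.induction_on with
  | empty => simp [swapProd_empty]
  | insert _ _ ha ih =>
    rename_i a s
    rw [swapProd_insert f g hfg hf hg ha]
    constructor
    · intro x hx
      rw [Equiv.Perm.mul_apply, ih.1 x (fun l hl => hx l (Finset.mem_insert_of_mem hl))]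
      exact Equiv.swap_apply_of_ne_of_ne (hx a (Finset.mem_insert_self a s)).1
        (hx a (Finset.mem_insert_self a s)).2
    · intro l hl
      rcases Finset.mem_insert.mp hl with rfl | hl
      · have h1 : swapProd f g hfg hf hg s (f l) = f l := by
          refine ih.1 (f l) fun m hm => ⟨fun h => ?_, hfg l m⟩
          exact (fun hne : l ≠ m => hne (hf h)) (fun e => ha (e ▸ hm))
        have h2 : swapProd f g hfg hf hg s (g l) = g l := by
          refine ih.1 (g l) fun m hm => ⟨fun h => hfg m l h.symm, fun h => ?_⟩
          exact (fun hne : l ≠ m => hne (hg h)) (fun e => ha (e ▸ hm))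
        constructor
        · rw [Equiv.Perm.mul_apply, h1, Equiv.swap_apply_left]
        · rw [Equiv.Perm.mul_apply, h2, Equiv.swap_apply_right]
      · have hla : l ≠ a := fun e => ha (e ▸ hl)
        constructor
        · rw [Equiv.Perm.mul_apply, (ih.2 l hl).1]
          exact Equiv.swap_apply_of_ne_of_ne (fun h => hfg a l h.symm)
            (fun h => hla (hg h))
        · rw [Equiv.Perm.mul_apply, (ih.2 l hl).2]
          exact Equiv.swap_apply_of_ne_of_ne (fun h => hla (hf h)) (hfg l a)

private lemma swapProd_mem_closure (S : Finset ι) :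
    swapProd f g hfg hf hg S ∈
      Subgroup.closure {τ : Equiv.Perm α | ∃ l : ι, τ = Equiv.swap (f l) (g l)} :=
  Subgroup.noncommProd_mem _ _ fun l _ => Subgroup.subset_closure ⟨l, rfl⟩

private lemma closure_prop (σ : Equiv.Perm α)
    (hσ : σ ∈ Subgroup.closure {τ : Equiv.Perm α | ∃ l : ι, τ = Equiv.swap (f l) (g l)}) :
    ∀ x, σ x = x ∨ ∃ l, (x = f l ∧ σ x = g l) ∨ (x = g l ∧ σ x = f l) := by
  induction hσ using Subgroup.closure_induction with
  | mem τ hτ =>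
    obtain ⟨l, rfl⟩ := hτ
    intro x
    by_cases h1 : x = f l
    · exact Or.inr ⟨l, Or.inl ⟨h1, by rw [h1, Equiv.swap_apply_left]⟩⟩
    by_cases h2 : x = g l
    · exact Or.inr ⟨l, Or.inr ⟨h2, by rw [h2, Equiv.swap_apply_right]⟩⟩
    · exact Or.inl (Equiv.swap_apply_of_ne_of_ne h1 h2)
  | one => exact fun x => Or.inl rfl
  | mul a b _ _ ha hb =>
    intro x
    rcases hb x with hx | ⟨l, ⟨hx1, hx2⟩ | ⟨hx1, hx2⟩⟩
    · rcases ha x with hy | ⟨l, ⟨hy1, hy2⟩ | ⟨hy1, hy2⟩⟩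
      · exact Or.inl (by rw [Equiv.Perm.mul_apply, hx, hy])
      · exact Or.inr ⟨l, Or.inl ⟨hy1, by rw [Equiv.Perm.mul_apply, hx, hy2]⟩⟩
      · exact Or.inr ⟨l, Or.inr ⟨hy1, by rw [Equiv.Perm.mul_apply, hx, hy2]⟩⟩
    · rcases ha (g l) with hy | ⟨m, ⟨hy1, hy2⟩ | ⟨hy1, hy2⟩⟩
      · exact Or.inr ⟨l, Or.inl ⟨hx1, by rw [Equiv.Perm.mul_apply, hx2, hy]⟩⟩
      · exact absurd hy1.symm (hfg m l)
      · have : l = m := hg hy1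
        subst this
        exact Or.inl (by rw [Equiv.Perm.mul_apply, hx2, hy2, hx1])
    · rcases ha (f l) with hy | ⟨m, ⟨hy1, hy2⟩ | ⟨hy1, hy2⟩⟩
      · exact Or.inr ⟨l, Or.inr ⟨hx1, by rw [Equiv.Perm.mul_apply, hx2, hy]⟩⟩
      · have : l = m := hf hy1
        subst this
        exact Or.inl (by rw [Equiv.Perm.mul_apply, hx2, hy2, hx1])
      · exact absurd hy1 (hfg l m)
  | inv a _ ha =>
    intro x
    rcases ha (a⁻¹ x) with hy | ⟨l, ⟨hy1, hy2⟩ | ⟨hy1, hy2⟩⟩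
    · left
      have : x = a⁻¹ x := by
        conv_lhs => rw [← (show a (a⁻¹ x) = x from Equiv.apply_symm_apply a x), hy]
      exact this.symm
    · exact Or.inr ⟨l, Or.inr ⟨by rw [← (show a (a⁻¹ x) = x from Equiv.apply_symm_apply a x), hy2], by rw [hy1]⟩⟩
    · exact Or.inr ⟨l, Or.inl ⟨by rw [← (show a (a⁻¹ x) = x from Equiv.apply_symm_apply a x), hy2], by rw [hy1]⟩⟩

private lemma exists_swapProd [Fintype ι] (σ : Equiv.Perm α)
    (hσ : ∀ x, σ x = x ∨ ∃ l, (x = f l ∧ σ x = g l) ∨ (x = g l ∧ σ x = f l)) :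
    ∃ S : Finset ι, σ = swapProd f g hfg hf hg S := by
  classical
  refine ⟨Finset.univ.filter fun l => σ (f l) = g l, Equiv.ext fun x => ?_⟩
  have hspec := swapProd_spec f g hfg hf hg (Finset.univ.filter fun l => σ (f l) = g l)
  rcases hσ x with hx | ⟨l, ⟨hx1, hx2⟩ | ⟨hx1, hx2⟩⟩
  · rw [hx]
    refine (hspec.1 x fun m hm => ⟨fun e => ?_, fun e => ?_⟩).symm
    · have hm' : σ (f m) = g m := (Finset.mem_filter.mp hm).2
      rw [← e, hx, e] at hm'
      exact hfg m m hm'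
    · have hm' : σ (f m) = g m := (Finset.mem_filter.mp hm).2
      rw [← e, ← hx] at hm'
      exact hfg m m (by rw [σ.injective hm', e])
  · subst hx1
    rw [hx2]
    exact ((hspec.2 l (Finset.mem_filter.mpr ⟨Finset.mem_univ l, hx2⟩)).1).symm
  · subst hx1
    have hfl : σ (f l) = g l := by
      rcases hσ (f l) with hy | ⟨m, ⟨hy1, hy2⟩ | ⟨hy1, hy2⟩⟩
      · exact absurd (σ.injective (hy.trans hx2.symm)) (hfg l l)
      · have : l = m := hf hy1
        subst this; exact hy2
      · exact absurd hy1 (hfg l m)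
    rw [hx2]
    exact ((hspec.2 l (Finset.mem_filter.mpr ⟨Finset.mem_univ l, hfl⟩)).2).symm

end SwapProd

open Fin.NatCast

/-- For the fixed-point free involution `π = ∏ (i_l j_{l+k-1})` on the
circularly ordered letters `i₁ < j₁ < ⋯ < i_{2k+1} < j_{2k+1}`, the stabilizer
of `π` under conjugation by the group `Z = ⟨(i_l j_{l−1})⟩` is trivial, so the
`Z`-conjugation orbit of `π` has exactly `2^{2k+1}` elements. -/
theorem stabilizer_trivial_orbit_size (k : ℕ) (hk : 1 ≤ k) {α : Type*}
    [LinearOrder α] (i j : Fin (2 * k + 1) → α)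
    (hij : ∀ l, i l < j l)
    (hji : ∀ l : Fin (2 * k + 1), (h : l.val + 1 < 2 * k + 1) →
      j l < i ⟨l.val + 1, h⟩)
    (π : Equiv.Perm α)
    (hπ : ∀ l : Fin (2 * k + 1),
      π (i l) = j (l + (k : Fin (2 * k + 1)) - 1) ∧
      π (j (l + (k : Fin (2 * k + 1)) - 1)) = i l)
    (hfix : ∀ x : α, (∀ l, x ≠ i l ∧ x ≠ j l) → π x = x) :
    (∀ σ ∈ Subgroup.closure
        {τ : Equiv.Perm α | ∃ l : Fin (2 * k + 1), τ = Equiv.swap (i l) (j (l - 1))},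
      σ * π * σ⁻¹ = π → σ = 1) ∧
    Set.ncard {ρ : Equiv.Perm α | ∃ σ ∈ Subgroup.closure
        {τ : Equiv.Perm α | ∃ l : Fin (2 * k + 1), τ = Equiv.swap (i l) (j (l - 1))},
      ρ = σ * π * σ⁻¹} = 2 ^ (2 * k + 1) := by
  classical
  -- ordering facts
  have hlt0 : ∀ (m : ℕ) (hm : m < 2 * k + 1) (l : Fin (2 * k + 1)),
      l.val < m → j l < i ⟨m, hm⟩ := by
    intro m
    induction m with
    | zero => intro hm l hl; omega
    | succ p ih =>
      intro hm l hl
      have hp : p < 2 * k + 1 := by omega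
      have hstep : j ⟨p, hp⟩ < i ⟨p + 1, hm⟩ := hji ⟨p, hp⟩ hm
      rcases Nat.lt_or_ge l.val p with h | h
      · exact ((ih hp l h).trans (hij ⟨p, hp⟩)).trans hstep
      · have hl' : l = ⟨p, hp⟩ := Fin.ext (by simp only [Fin.val_mk]; omega)
        rw [hl']; exact hstep
  have hlt : ∀ l m : Fin (2 * k + 1), l < m → j l < i m := by
    intro l m hlm
    have := hlt0 m.val m.isLt l hlm
    simpa using this
  have iinj : Function.Injective i := by
    intro a b h
    by_contra hab
    rcases Ne.lt_or_gt hab with h1 | h1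
    · exact absurd h (ne_of_lt ((hij a).trans (hlt a b h1)))
    · exact absurd h.symm (ne_of_lt ((hij b).trans (hlt b a h1)))
  have jinj : Function.Injective j := by
    intro a b h
    by_contra hab
    rcases Ne.lt_or_gt hab with h1 | h1
    · exact absurd h (ne_of_lt ((hlt a b h1).trans (hij b)))
    · exact absurd h.symm (ne_of_lt ((hlt b a h1).trans (hij a)))
  have inej : ∀ l m : Fin (2 * k + 1), i l ≠ j m := by
    intro l m
    rcases lt_trichotomy l m with h | rfl | h
    · exact ne_of_lt ((hij l).trans ((hlt l m h).trans (hij m)))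
    · exact ne_of_lt (hij l)
    · exact ne_of_gt (hlt m l h)
  -- the interleaved swap family
  set g : Fin (2 * k + 1) → α := fun l => j (l - 1) with hg
  have hfg : ∀ a b : Fin (2 * k + 1), i a ≠ g b := fun a b => inej a (b - 1)
  have hginj : Function.Injective g := by
    intro a b h
    exact sub_left_inj.mp (jinj h)
  -- Fin arithmetic
  set K : Fin (2 * k + 1) := (k : Fin (2 * k + 1)) with hKdef
  have hπi : ∀ l, π (i l) = j (l + K - 1) := fun l => (hπ l).1
  have hπj : ∀ m, π (j m) = i (m + 1 - K) := by
    intro m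
    have h := (hπ (m + 1 - K)).2
    have he : m + 1 - K + K - 1 = m := by open Fin.CommRing in ring
    rwa [he] at h
  have hKK : K + K ≠ 0 := by
    intro h0
    have hv : (K + K).val = 0 := by rw [h0]; rfl
    rw [Fin.val_add] at hv
    have hk' : K.val = k := by
      rw [hKdef, Fin.val_natCast, Nat.mod_eq_of_lt (by omega)]
    rw [hk', Nat.mod_eq_of_lt (by omega)] at hv
    omega
  -- product of swaps over a subset
  let Φ : Finset (Fin (2 * k + 1)) → Equiv.Perm α :=
    fun S => swapProd i g hfg iinj hginj S
  have hspec := fun S => swapProd_spec i g hfg iinj hginj S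
  have hmemiff : ∀ (S : Finset (Fin (2 * k + 1))) (l), Φ S (i l) = g l ↔ l ∈ S := by
    intro S l
    constructor
    · intro h
      by_contra hl
      have hfix' : Φ S (i l) = i l := by
        refine (hspec S).1 (i l) fun m hm => ⟨fun e => ?_, hfg l m⟩
        exact hl (iinj e ▸ hm)
      rw [hfix'] at h
      exact hfg l l h
    · intro hl
      exact ((hspec S).2 l hl).1
  have hΦinj : ∀ S T, Φ S = Φ T → S = T := by
    intro S T h
    ext l
    rw [← hmemiff S l, ← hmemiff T l, h]
  -- every element of the closure is such a product
  have hZprop : ∀ σ ∈ Subgroup.closure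
      {τ : Equiv.Perm α | ∃ l : Fin (2 * k + 1), τ = Equiv.swap (i l) (j (l - 1))},
      ∃ S, σ = Φ S := by
    intro σ hσ
    exact exists_swapProd i g hfg iinj hginj σ (closure_prop i g hfg iinj hginj σ hσ)
  have hΦmem : ∀ S, Φ S ∈ Subgroup.closure
      {τ : Equiv.Perm α | ∃ l : Fin (2 * k + 1), τ = Equiv.swap (i l) (j (l - 1))} :=
    fun S => swapProd_mem_closure i g hfg iinj hginj S
  -- the stabilizer computation
  have hstab : ∀ S : Finset (Fin (2 * k + 1)), Φ S * π * (Φ S)⁻¹ = π → S = ∅ := by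
    intro S hS
    by_contra hne
    obtain ⟨u, hu⟩ := Finset.nonempty_iff_ne_empty.mpr hne
    have hcm : Φ S * π = π * Φ S := by
      calc Φ S * π = Φ S * π * (Φ S)⁻¹ * Φ S := by group
        _ = π * Φ S := by rw [hS]
    have hcx := congrArg (fun p : Equiv.Perm α => p (i u)) hcm
    simp only [Equiv.Perm.mul_apply] at hcx
    rw [hπi u] at hcx
    have h1 : Φ S (i u) = g u := ((hspec S).2 u hu).1
    rw [h1] at hcx
    have h2 : π (g u) = i (u - K) := by
      rw [hg]
      rw [hπj (u - 1)]
      congr 1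
      open Fin.CommRing in ring
    rw [h2] at hcx
    -- lhs : Φ S (j (u + K - 1)) = Φ S (g (u + K))
    have hj' : j (u + K - 1) = g (u + K) := rfl
    rw [hj'] at hcx
    by_cases hmem : u + K ∈ S
    · have h3 : Φ S (g (u + K)) = i (u + K) := ((hspec S).2 (u + K) hmem).2
      rw [h3] at hcx
      have h4 : u + K = u - K := iinj hcx
      exact hKK (by open Fin.CommRing in linear_combination h4)
    · have h3 : Φ S (g (u + K)) = g (u + K) := by
        refine (hspec S).1 (g (u + K)) fun m hm => ⟨fun e => hfg m (u + K) e.symm, fun e => ?_⟩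
        exact hmem (hginj e ▸ hm)
      rw [h3] at hcx
      exact hfg (u - K) (u + K) hcx.symm
  refine ⟨?_, ?_⟩
  · intro σ hσ hfix1
    obtain ⟨S, rfl⟩ := hZprop σ hσ
    rw [hstab S hfix1]
    exact swapProd_empty i g hfg iinj hginj
  · have hOrb : {ρ : Equiv.Perm α | ∃ σ ∈ Subgroup.closure
        {τ : Equiv.Perm α | ∃ l : Fin (2 * k + 1), τ = Equiv.swap (i l) (j (l - 1))},
        ρ = σ * π * σ⁻¹} =
        (fun S : Finset (Fin (2 * k + 1)) => Φ S * π * (Φ S)⁻¹) '' Set.univ := by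
      ext ρ
      simp only [Set.mem_setOf_eq, Set.image_univ, Set.mem_range]
      constructor
      · rintro ⟨σ, hσ, rfl⟩
        obtain ⟨S, rfl⟩ := hZprop σ hσ
        exact ⟨S, rfl⟩
      · rintro ⟨S, rfl⟩
        exact ⟨Φ S, hΦmem S, rfl⟩
    have hinj : Function.Injective
        (fun S : Finset (Fin (2 * k + 1)) => Φ S * π * (Φ S)⁻¹) := by
      intro S T h
      simp only at h
      have hmem : (Φ T)⁻¹ * Φ S ∈ Subgroup.closure
          {τ : Equiv.Perm α | ∃ l : Fin (2 * k + 1), τ = Equiv.swap (i l) (j (l - 1))} :=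
        mul_mem (inv_mem (hΦmem T)) (hΦmem S)
      obtain ⟨U, hU⟩ := hZprop _ hmem
      have hU1 : Φ U * π * (Φ U)⁻¹ = π := by
        rw [← hU]
        calc (Φ T)⁻¹ * Φ S * π * ((Φ T)⁻¹ * Φ S)⁻¹
            = (Φ T)⁻¹ * (Φ S * π * (Φ S)⁻¹) * Φ T := by group
          _ = (Φ T)⁻¹ * (Φ T * π * (Φ T)⁻¹) * Φ T := by rw [h]
          _ = π := by group
      have hU0 : (Φ T)⁻¹ * Φ S = 1 := by
        rw [hU, hstab U hU1]
        exact swapProd_empty i g hfg iinj hginj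
      exact hΦinj S T (inv_mul_eq_one.mp hU0).symm
    rw [hOrb, Set.image_univ, ← Set.image_univ, Set.ncard_image_of_injective _ hinj,
      Set.ncard_univ, Nat.card_eq_fintype_card, Fintype.card_finset, Fintype.card_fin]
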